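/- arXiv:1707.07366 — 4 statements merged into one kernel-verified Lean document; each statement's English description precedes it below -/
import Mathlib

section
/- Let $O_F$ be a complete discrete valuation ring with uniformizer $\pi$, $M$ a finite free $O_F$-module, and $\Gamma$ a subgroup of $\mathrm{Aut}_{O_F}(M)$. If $M^\Gamma/\pi M^\Gamma = (M/\pi M)^\Gamma$ (i.e., the natural injection is surjective for $k=1$), then for all $k \geq 1$ the natural map $M^\Gamma/\pi^k M^\Gamma \to (M/\pi^k M)^\Gamma$ is an isomorphism. -/
/-- Let `O` be a complete discrete valuation ring with uniformizer `π`, `M` a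
finite free `O`-module and `Γ ≤ Aut_O(M)`.  If the natural injection
`M^Γ/π M^Γ → (M/π M)^Γ` is surjective (the case `k = 1`), then for all `k ≥ 1` the natural
map `M^Γ/π^k M^Γ → (M/π^k M)^Γ` is an isomorphism, i.e. both injective and surjective.
Injectivity: a `Γ`-fixed element divisible by `π^k` is `π^k` times a fixed element.
Surjectivity: any `m` whose class mod `π^k` is `Γ`-fixed is congruent mod `π^k` to a
`Γ`-fixed element. -/
theorem stmt_2 (O M : Type) [CommRing O] [IsDomain O] [IsDiscreteValuationRing O]
    (π : O) (hπ : Irreducible π) [IsAdicComplete (Ideal.span {π}) O]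
    [AddCommGroup M] [Module O M] [Module.Free O M] [Module.Finite O M]
    (Γ : Subgroup (M ≃ₗ[O] M))
    (hsurj1 : ∀ m : M, (∀ γ ∈ Γ, ∃ x : M, γ m - m = π • x) →
      ∃ y : M, (∀ γ ∈ Γ, γ y = y) ∧ ∃ x : M, m - y = π • x)
    (k : ℕ) (hk : 1 ≤ k) :
    (∀ m : M, (∀ γ ∈ Γ, γ m = m) → (∃ x : M, m = π ^ k • x) →
        ∃ y : M, (∀ γ ∈ Γ, γ y = y) ∧ m = π ^ k • y) ∧
    (∀ m : M, (∀ γ ∈ Γ, ∃ x : M, γ m - m = π ^ k • x) →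
        ∃ y : M, (∀ γ ∈ Γ, γ y = y) ∧ ∃ x : M, m - y = π ^ k • x) := by
  have hπ0 : π ≠ 0 := hπ.ne_zero
  have hpk : (π ^ k : O) ≠ 0 := pow_ne_zero k hπ0
  constructor
  · rintro m hm ⟨x, rfl⟩
    refine ⟨x, fun γ hγ => ?_, rfl⟩
    have h := hm γ hγ
    rw [map_smul] at h
    exact smul_right_injective M hpk h
  · clear hpk
    induction k, hk using Nat.le_induction with
    | base =>
      intro m hm
      obtain ⟨y, hy, x, hx⟩ := hsurj1 m (by simpa using hm)
      exact ⟨y, hy, x, by simpa using hx⟩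
    | succ k hk ih =>
      intro m hm
      have hm' : ∀ γ ∈ Γ, ∃ x : M, γ m - m = π ^ k • x := by
        intro γ hγ
        obtain ⟨x, hx⟩ := hm γ hγ
        exact ⟨π • x, by rw [hx, pow_succ, mul_smul]⟩
      obtain ⟨y, hy, x, hxy⟩ := ih m hm'
      have hx' : ∀ γ ∈ Γ, ∃ w : M, γ x - x = π • w := by
        intro γ hγ
        obtain ⟨xγ, hxγ⟩ := hm γ hγ
        refine ⟨xγ, ?_⟩
        have key : π ^ k • ((γ : M ≃ₗ[O] M) x - x) = π ^ k • (π • xγ) := by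
          rw [smul_sub, ← map_smul, ← hxy, map_sub, hy γ hγ,
            sub_sub_sub_cancel_right, hxγ, pow_succ, mul_smul]
        exact smul_right_injective M (pow_ne_zero k hπ0) key
      obtain ⟨z, hz, w, hw⟩ := hsurj1 x hx'
      refine ⟨y + π ^ k • z, fun γ hγ => ?_, w, ?_⟩
      · rw [map_add, map_smul, hy γ hγ, hz γ hγ]
      · have : m - (y + π ^ k • z) = π ^ k • (x - z) := by
          rw [smul_sub, ← hxy]; abel
        rw [this, hw, pow_succ, mul_smul]
end

section
/- Let $F$ be a perfect field, $V$ a finite-dimensional $F$-vector space, and $H \subseteq G \subseteq \mathrm{GL}(V)$ subgroups. If $V$ is semisimple as an $H$-representation and $\dim_F \mathrm{End}_G(V) \geq \dim_F \mathrm{End}_H(V)$, then $V$ is semisimple as a $G$-representation. -/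
open Module

/-- A set `S` of linear automorphisms acts semisimply on `V` if every `S`-stable subspace
has an `S`-stable complement. -/
def ActsSemisimply {F V : Type} [Field F] [AddCommGroup V] [Module F V]
    (S : Set (V ≃ₗ[F] V)) : Prop :=
  ∀ U : Submodule F V, (∀ g ∈ S, ∀ x ∈ U, g x ∈ U) →
    ∃ U' : Submodule F V, (∀ g ∈ S, ∀ x ∈ U', g x ∈ U') ∧ IsCompl U U'

/-- The commutant (centralizer) of a set of automorphisms inside `End_F(V)`. -/
noncomputable def commutantDim {F V : Type} [Field F] [AddCommGroup V] [Module F V]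
    (S : Set (V ≃ₗ[F] V)) : ℕ :=
  Module.finrank F
    (Subalgebra.centralizer F ((fun g : V ≃ₗ[F] V => (g : Module.End F V)) '' S) :
      Subalgebra F (Module.End F V))

/-- `F` a perfect field, `V` a finite-dimensional `F`-vector space,
`H ⊆ G ⊆ GL(V)` subgroups.  If `V` is semisimple as an `H`-representation and
`dim_F End_G(V) ≥ dim_F End_H(V)`, then `V` is semisimple as a `G`-representation. -/
theorem stmt_5 (F V : Type) [Field F] [PerfectField F]
    [AddCommGroup V] [Module F V] [FiniteDimensional F V]
    (H G : Subgroup (V ≃ₗ[F] V)) (hHG : H ≤ G)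
    (hssH : ActsSemisimply (H : Set (V ≃ₗ[F] V)))
    (hdim : commutantDim (G : Set (V ≃ₗ[F] V)) ≥ commutantDim (H : Set (V ≃ₗ[F] V))) :
    ActsSemisimply (G : Set (V ≃ₗ[F] V)) := by
  set f : (V ≃ₗ[F] V) → Module.End F V := fun g => (g : Module.End F V)
  set CG := Subalgebra.centralizer F (f '' (G : Set (V ≃ₗ[F] V))) with hCG
  set CH := Subalgebra.centralizer F (f '' (H : Set (V ≃ₗ[F] V))) with hCH
  have hle : CG ≤ CH := Subalgebra.centralizer_le F _ _ (Set.image_mono (f := f) hHG)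
  have heq : CG = CH := by
    have : Subalgebra.toSubmodule CG = Subalgebra.toSubmodule CH :=
      Submodule.eq_of_le_of_finrank_le hle hdim
    exact_mod_cast Subalgebra.toSubmodule_injective this
  intro U hU
  obtain ⟨U', hU'H, hcompl⟩ := hssH U (fun g hg => hU g (hHG hg))
  refine ⟨U', ?_, hcompl⟩
  set π : Module.End F V := U.subtype ∘ₗ U.linearProjOfIsCompl U' hcompl with hπ
  have hπU : ∀ x ∈ U, π x = x := fun x hx => by
    exact congrArg Subtype.val (Submodule.linearProjOfIsCompl_apply_left hcompl ⟨x, hx⟩)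
  have hπU' : ∀ x ∈ U', π x = 0 := fun x hx => by
    simp [hπ]; exact Submodule.projectionOnto_apply_of_mem_right hcompl hx
  have hπmem : π ∈ CH := by
    rw [hCH, Subalgebra.mem_centralizer_iff]
    rintro - ⟨h, hh, rfl⟩
    apply LinearMap.ext
    intro x
    obtain ⟨u, hu, u', hu', rfl⟩ : ∃ u ∈ U, ∃ u' ∈ U', u + u' = x :=
      by obtain ⟨a, b, ha, hb, e⟩ := Submodule.codisjoint_iff_exists_add_eq.mp hcompl.codisjoint x; exact ⟨a, ha, b, hb, e⟩
    have h1 : (h : Module.End F V) u ∈ U := hU h (hHG hh) u hu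
    have h2 : (h : Module.End F V) u' ∈ U' := hU'H h hh u' hu'
    simp only [Module.End.mul_apply, map_add]
    rw [hπU _ hu, hπU' _ hu', hπU _ h1, hπU' _ h2]
    simp [f]
  have hπG : π ∈ CG := heq ▸ hπmem
  intro g hg x hx
  have hcomm : π * (g : Module.End F V) = (g : Module.End F V) * π := by
    rw [hCG, Subalgebra.mem_centralizer_iff] at hπG
    exact (hπG _ ⟨g, hg, rfl⟩).symm
  have : π ((g : Module.End F V) x) = 0 := by
    have := congrArg (fun φ => φ x) hcomm
    simp only [Module.End.mul_apply] at this
    rw [this, hπU' x hx]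
    simp
  have : U.linearProjOfIsCompl U' hcompl (g x) = 0 := by
    simpa [hπ] using this
  exact (Submodule.linearProjOfIsCompl_apply_eq_zero_iff hcompl).1 this
end

section
/- Let $F$ be a field, $G$ a finite group, $H$ a normal subgroup of $G$ such that the index $[G:H]$ is invertible in $F$, and $V$ a finite-dimensional $F$-representation of $G$. Then $V$ is semisimple as a $G$-representation if and only if its restriction to $H$ is semisimple. -/
set_option linter.unusedSectionVars false

/-- A representation `ρ` of a group `G` on `V` is semisimple when restricted to a subset
`S ⊆ G` if every subspace stable under all of `S` admits an `S`-stable complement. -/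
def RestrictedSemisimple {F G V : Type} [Field F] [Group G] [AddCommGroup V] [Module F V]
    (ρ : Representation F G V) (S : Set G) : Prop :=
  ∀ U : Submodule F V, (∀ g ∈ S, ∀ x ∈ U, ρ g x ∈ U) →
    ∃ U' : Submodule F V, (∀ g ∈ S, ∀ x ∈ U', ρ g x ∈ U') ∧ IsCompl U U'


section Aux
variable {F G V : Type} [Field F] [Group G] [AddCommGroup V] [Module F V]
variable (ρ : Representation F G V)

/-- Stability of a submodule under a set of group elements. -/
def RhoStab (S : Set G) (U : Submodule F V) : Prop :=
  ∀ g ∈ S, ∀ x ∈ U, ρ g x ∈ U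

lemma rho_inv_apply (g : G) (x : V) : ρ g⁻¹ (ρ g x) = x := by
  have : (ρ g⁻¹ * ρ g) x = (1 : Module.End F V) x := by rw [← map_mul, inv_mul_cancel, map_one]
  simpa [Module.End.mul_apply] using this

lemma rho_map_map (g g' : G) (U : Submodule F V) :
    (U.map (ρ g')).map (ρ g) = U.map (ρ (g * g')) := by
  rw [map_mul, Module.End.mul_eq_comp, ← Submodule.map_comp]

lemma rho_map_one (U : Submodule F V) : U.map (ρ 1) = U := by
  rw [map_one]; exact Submodule.map_id U

lemma rho_map_inv_map (g : G) (U : Submodule F V) : (U.map (ρ g)).map (ρ g⁻¹) = U := by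
  rw [rho_map_map, inv_mul_cancel, rho_map_one]

lemma rho_map_ne_bot (g : G) {U : Submodule F V} (hU : U ≠ ⊥) : U.map (ρ g) ≠ ⊥ := by
  intro h
  apply hU
  rw [← rho_map_inv_map ρ g U, h, Submodule.map_bot]

/-- A subgroup-stable submodule is mapped onto itself by group elements of the subgroup. -/
lemma rho_map_of_stab {H : Subgroup G} {U : Submodule F V} (hU : RhoStab ρ (H : Set G) U)
    {h : G} (hh : h ∈ H) : U.map (ρ h) = U := by
  apply le_antisymm
  · rintro x ⟨y, hy, rfl⟩
    exact hU h hh y hy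
  · intro x hx
    refine ⟨ρ h⁻¹ x, hU h⁻¹ (inv_mem hh) x hx, ?_⟩
    have := rho_inv_apply ρ h⁻¹ x
    simpa using this

lemma rhoStab_inf {S : Set G} {U U' : Submodule F V} (h : RhoStab ρ S U) (h' : RhoStab ρ S U') :
    RhoStab ρ S (U ⊓ U') :=
  fun g hg x hx => ⟨h g hg x hx.1, h' g hg x hx.2⟩

lemma rhoStab_sup {S : Set G} {U U' : Submodule F V} (h : RhoStab ρ S U) (h' : RhoStab ρ S U') :
    RhoStab ρ S (U ⊔ U') := by
  intro g hg x hx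
  rcases Submodule.mem_sup.1 hx with ⟨u, hu, u', hu', rfl⟩
  exact Submodule.mem_sup.2 ⟨ρ g u, h g hg u hu, ρ g u', h' g hg u' hu', (map_add _ _ _).symm⟩

lemma rhoStab_iff_map_le {S : Set G} {U : Submodule F V} :
    RhoStab ρ S U ↔ ∀ g ∈ S, U.map (ρ g) ≤ U := by
  constructor
  · rintro h g hg x ⟨y, hy, rfl⟩; exact h g hg y hy
  · intro h g hg x hx; exact h g hg ⟨x, hx, rfl⟩

lemma rhoStab_iSup {S : Set G} {ι : Sort*} {p : ι → Submodule F V}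
    (h : ∀ i, RhoStab ρ S (p i)) : RhoStab ρ S (⨆ i, p i) := by
  rw [rhoStab_iff_map_le]
  intro g hg
  rw [Submodule.map_iSup]
  exact iSup_le fun i => le_trans ((rhoStab_iff_map_le ρ).1 (h i) g hg) (le_iSup p i)

variable [FiniteDimensional F V]

/-- Existence of a minimal nonzero `S`-stable submodule inside a nonzero stable one. -/
lemma exists_minimal_stab (S : Set G) {W : Submodule F V} (hW : W ≠ ⊥) (hWs : RhoStab ρ S W) :
    ∃ M ≤ W, M ≠ ⊥ ∧ RhoStab ρ S M ∧
      ∀ M', M' ≤ M → M' ≠ ⊥ → RhoStab ρ S M' → M' = M := by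
  classical
  set A : Set ℕ := {n | ∃ M : Submodule F V, M ≤ W ∧ M ≠ ⊥ ∧ RhoStab ρ S M ∧
    Module.finrank F M = n} with hA
  have hne : A.Nonempty := ⟨Module.finrank F W, W, le_rfl, hW, hWs, rfl⟩
  obtain ⟨M, hMW, hM0, hMs, hMr⟩ := Nat.sInf_mem hne
  refine ⟨M, hMW, hM0, hMs, fun M' hle h0 hs => ?_⟩
  have h1 : sInf A ≤ Module.finrank F M' :=
    Nat.sInf_le ⟨M', le_trans hle hMW, h0, hs, rfl⟩
  rw [← hMr] at h1
  exact Submodule.eq_of_le_of_finrank_le hle h1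


/-- Conjugation stability: if `U` is `H`-stable and `H` is normal, `map (ρ g) U` is `H`-stable. -/
lemma rhoStab_map_conj {H : Subgroup G} [H.Normal] {U : Submodule F V}
    (hU : RhoStab ρ (H : Set G) U) (g : G) : RhoStab ρ (H : Set G) (U.map (ρ g)) := by
  rintro h hh x ⟨y, hy, rfl⟩
  have hmem : g⁻¹ * h * g ∈ H := by
    have := Subgroup.Normal.conj_mem ‹H.Normal› h hh g⁻¹
    simpa using this
  refine ⟨ρ (g⁻¹ * h * g) y, hU _ hmem y hy, ?_⟩
  have : (ρ g * ρ (g⁻¹ * h * g)) y = (ρ h * ρ g) y := by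
    rw [← map_mul, ← map_mul]
    congr 1
    group
  simpa [Module.End.mul_apply] using this

/-- Clifford core: a minimal nonzero `G`-stable submodule is contained in the sum of all
minimal nonzero `H`-stable submodules. -/
lemma minimal_univ_le_sSup_minimal_H (H : Subgroup G) [H.Normal]
    {M : Submodule F V} (hM0 : M ≠ ⊥) (hMs : RhoStab ρ (Set.univ : Set G) M)
    (hMmin : ∀ M', M' ≤ M → M' ≠ ⊥ → RhoStab ρ (Set.univ : Set G) M' → M' = M) :
    M ≤ sSup {N : Submodule F V | N ≠ ⊥ ∧ RhoStab ρ (H : Set G) N ∧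
      ∀ N', N' ≤ N → N' ≠ ⊥ → RhoStab ρ (H : Set G) N' → N' = N} := by
  have hMsH : RhoStab ρ (H : Set G) M := fun g _ => hMs g trivial
  obtain ⟨W, hWM, hW0, hWs, hWmin⟩ := exists_minimal_stab ρ (H : Set G) hM0 hMsH
  -- the sum of all translates of W is G-stable, nonzero, contained in M, hence equals M
  set D : Submodule F V := ⨆ g : G, W.map (ρ g) with hD
  have hDle : D ≤ M := iSup_le fun g => by
    rw [← rho_map_of_stab ρ (H := ⊤) (fun g _ x hx => hMs g trivial x hx) (Subgroup.mem_top g)]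
    exact Submodule.map_mono hWM
  have hD0 : D ≠ ⊥ := by
    intro h
    apply hW0
    have : W.map (ρ 1) ≤ D := le_iSup (fun g => W.map (ρ g)) 1
    rw [rho_map_one] at this
    rw [h, le_bot_iff] at this
    exact this
  have hDs : RhoStab ρ (Set.univ : Set G) D := by
    rw [rhoStab_iff_map_le]
    intro g _
    rw [Submodule.map_iSup]
    exact iSup_le fun g' => by rw [rho_map_map]; exact le_iSup (fun g => W.map (ρ g)) (g * g')
  have hDM : D = M := hMmin D hDle hD0 hDs
  rw [← hDM]
  refine iSup_le fun g => le_sSup ?_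
  refine ⟨rho_map_ne_bot ρ g hW0, rhoStab_map_conj ρ hWs g, ?_⟩
  intro N' hle h0 hs
  have h1 : N'.map (ρ g⁻¹) ≤ W := by
    rw [← rho_map_inv_map ρ g W]; exact Submodule.map_mono hle
  have h2 := hWmin _ h1 (rho_map_ne_bot ρ g⁻¹ h0) (rhoStab_map_conj ρ hs g⁻¹)
  have : (N'.map (ρ g⁻¹)).map (ρ g) = W.map (ρ g) := by rw [h2]
  rwa [rho_map_map, mul_inv_cancel, rho_map_one] at this


/-- If every `S`-stable submodule has an `S`-stable complement, then `V` is the sum of the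
minimal nonzero `S`-stable submodules. -/
lemma sSup_minimal_eq_top (S : Set G)
    (hss : ∀ U : Submodule F V, RhoStab ρ S U →
      ∃ U' : Submodule F V, RhoStab ρ S U' ∧ IsCompl U U') :
    sSup {N : Submodule F V | N ≠ ⊥ ∧ RhoStab ρ S N ∧
      ∀ N', N' ≤ N → N' ≠ ⊥ → RhoStab ρ S N' → N' = N} = ⊤ := by
  set 𝒮 := {N : Submodule F V | N ≠ ⊥ ∧ RhoStab ρ S N ∧
      ∀ N', N' ≤ N → N' ≠ ⊥ → RhoStab ρ S N' → N' = N} with h𝒮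
  set T := sSup 𝒮 with hT
  have hTs : RhoStab ρ S T := by
    rw [hT, sSup_eq_iSup']
    exact rhoStab_iSup ρ fun N => N.2.2.1
  obtain ⟨C, hCs, hC⟩ := hss T hTs
  rcases eq_or_ne C ⊥ with h | h
  · have := hC.codisjoint
    rw [codisjoint_iff, h, sup_bot_eq] at this
    exact this
  · obtain ⟨M, hMC, hM0, hMs, hMmin⟩ := exists_minimal_stab ρ S h hCs
    have hMT : M ≤ T := le_sSup ⟨hM0, hMs, hMmin⟩
    exact absurd (le_bot_iff.1 (le_trans (le_inf hMT hMC) hC.disjoint.le_bot)) hM0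

/-- If `V` is the sum of minimal nonzero `S`-stable submodules, every `S`-stable submodule
has an `S`-stable complement. -/
lemma stab_complement_of_sSup_minimal (S : Set G)
    (htop : sSup {N : Submodule F V | N ≠ ⊥ ∧ RhoStab ρ S N ∧
      ∀ N', N' ≤ N → N' ≠ ⊥ → RhoStab ρ S N' → N' = N} = ⊤)
    (U : Submodule F V) (hU : RhoStab ρ S U) :
    ∃ U' : Submodule F V, RhoStab ρ S U' ∧ IsCompl U U' := by
  classical
  set A : Set ℕ := {n | ∃ U' : Submodule F V, RhoStab ρ S U' ∧ Disjoint U U' ∧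
    Module.finrank F U' = n} with hA
  have hne : A.Nonempty := ⟨0, ⊥, fun g _ x hx => by simp_all, disjoint_bot_right, by simp⟩
  have hbdd : BddAbove A := by
    refine ⟨Module.finrank F V, ?_⟩
    rintro n ⟨U', _, _, rfl⟩
    exact Submodule.finrank_le U'
  obtain ⟨U', hU's, hdisj, hrank⟩ := Nat.sSup_mem hne hbdd
  refine ⟨U', hU's, hdisj, ?_⟩
  rw [codisjoint_iff]
  by_contra hne'
  -- some minimal stable N is not below U ⊔ U'
  have : ¬ ∀ N ∈ {N : Submodule F V | N ≠ ⊥ ∧ RhoStab ρ S N ∧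
      ∀ N', N' ≤ N → N' ≠ ⊥ → RhoStab ρ S N' → N' = N}, N ≤ U ⊔ U' := by
    intro hall
    exact hne' (le_antisymm le_top (htop ▸ sSup_le hall))
  push_neg at this
  obtain ⟨N, ⟨hN0, hNs, hNmin⟩, hNle⟩ := this
  have hNinf : N ⊓ (U ⊔ U') = ⊥ := by
    by_contra h
    have := hNmin _ inf_le_left h (rhoStab_inf ρ hNs (rhoStab_sup ρ hU hU's))
    exact hNle (this ▸ inf_le_right)
  -- U' ⊔ N is a bigger stable submodule disjoint from U
  have hdisj2 : Disjoint U (U' ⊔ N) := by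
    rw [disjoint_iff]
    rw [eq_bot_iff]
    rintro x ⟨hxU, hx2⟩
    rcases Submodule.mem_sup.1 hx2 with ⟨u', hu', m, hm, rfl⟩
    have hmem : m ∈ N ⊓ (U ⊔ U') := by
      refine ⟨hm, ?_⟩
      have : m = (u' + m) - u' := by abel
      rw [this]
      exact Submodule.sub_mem _ (Submodule.mem_sup_left hxU) (Submodule.mem_sup_right hu')
    rw [hNinf] at hmem
    simp only [Submodule.mem_bot] at hmem
    subst hmem
    have : u' ∈ U ⊓ U' := ⟨by simpa using hxU, hu'⟩
    rw [disjoint_iff.1 hdisj] at this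
    simpa using this
  have hlt : U' < U' ⊔ N := by
    refine lt_of_le_of_ne le_sup_left ?_
    intro h
    apply hNle
    have : N ≤ U' := h ▸ le_sup_right
    exact le_trans this le_sup_right
  have hgt : Module.finrank F U' < Module.finrank F ↥(U' ⊔ N) :=
    Submodule.finrank_lt_finrank_of_lt hlt
  have hmem2 : Module.finrank F ↥(U' ⊔ N) ∈ A :=
    ⟨U' ⊔ N, rhoStab_sup ρ hU's hNs, hdisj2, rfl⟩
  have := le_csSup hbdd hmem2
  omega


/-- Averaging: if the restriction to `H` is semisimple and `[G:H]` is invertible, then the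
whole representation is semisimple. -/
lemma univ_complement_of_H (H : Subgroup G) [Finite G] (hind : (H.index : F) ≠ 0)
    (hH : ∀ U : Submodule F V, RhoStab ρ (H : Set G) U →
      ∃ U' : Submodule F V, RhoStab ρ (H : Set G) U' ∧ IsCompl U U')
    (U : Submodule F V) (hU : RhoStab ρ (Set.univ : Set G) U) :
    ∃ U' : Submodule F V, RhoStab ρ (Set.univ : Set G) U' ∧ IsCompl U U' := by
  classical
  have hUH : RhoStab ρ (H : Set G) U := fun g _ => hU g trivial
  obtain ⟨U', hU's, hC⟩ := hH U hUH
  set p : V →ₗ[F] V := U.subtype ∘ₗ (U.projectionOnto U' hC) with hp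
  have hp1 : ∀ x ∈ U, p x = x := fun x hx => by
    simp [hp, Submodule.projectionOnto_apply_left hC ⟨x, hx⟩]
  have hp2 : ∀ x ∈ U', p x = 0 := fun x hx => by
    simp [hp, Submodule.projectionOnto_apply_right hC ⟨x, hx⟩]
  have hp3 : ∀ x, p x ∈ U := fun x => (U.projectionOnto U' hC x).2
  have hcomm : ∀ h ∈ H, ∀ x, p (ρ h x) = ρ h (p x) := by
    intro h hh x
    obtain ⟨u, hu, u', hu', rfl⟩ := Submodule.mem_sup.1
      ((codisjoint_iff.1 hC.codisjoint) ▸ Submodule.mem_top : x ∈ U ⊔ U')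
    have hL : p (ρ h (u + u')) = ρ h u := by
      rw [map_add, map_add, hp1 _ (hUH h hh u hu), hp2 _ (hU's h hh u' hu'), add_zero]
    have hR : ρ h (p (u + u')) = ρ h u := by
      rw [map_add, hp1 u hu, hp2 u' hu', add_zero]
    rw [hL, hR]
  set c : G → (V →ₗ[F] V) := fun g => ρ g ∘ₗ p ∘ₗ ρ g⁻¹ with hc
  have hc_apply : ∀ g x, c g x = ρ g (p (ρ g⁻¹ x)) := fun g x => rfl
  have hcH : ∀ (a b : G), a⁻¹ * b ∈ H → c a = c b := by
    intro a b hab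
    ext x
    have hb : b = a * (a⁻¹ * b) := by group
    rw [hc_apply, hc_apply, hb]
    have h1 : ρ (a * (a⁻¹ * b)) = ρ a * ρ (a⁻¹ * b) := map_mul _ _ _
    have h2 : ρ (a * (a⁻¹ * b))⁻¹ = ρ (a⁻¹ * b)⁻¹ * ρ a⁻¹ := by rw [mul_inv_rev, map_mul]
    rw [h1, h2, Module.End.mul_apply, Module.End.mul_apply]
    congr 1
    rw [← hcomm _ hab]
    have := rho_inv_apply ρ (a⁻¹ * b)⁻¹ (ρ a⁻¹ x)
    rw [inv_inv] at this
    rw [this]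
  -- descend to the quotient
  set cb : G ⧸ H → (V →ₗ[F] V) := fun q => Quotient.liftOn' q c (fun a b hab =>
    hcH a b (QuotientGroup.leftRel_apply.1 hab)) with hcb
  have hcb_mk : ∀ a : G, cb (QuotientGroup.mk a) = c a := fun a => rfl
  haveI : Fintype (G ⧸ H) := Fintype.ofFinite _
  set P : V →ₗ[F] V := ∑ q : G ⧸ H, cb q with hP
  have hP_apply : ∀ x, P x = ∑ q : G ⧸ H, cb q x := fun x => by
    rw [hP]; exact LinearMap.sum_apply _ _ _
  have hPU : ∀ x, P x ∈ U := by
    intro x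
    rw [hP_apply]
    refine Submodule.sum_mem _ fun q _ => ?_
    induction q using Quotient.inductionOn' with
    | h a => rw [hcb_mk, hc_apply]; exact hU a trivial _ (hp3 _)
  have hPid : ∀ x ∈ U, P x = (H.index : F) • x := by
    intro x hx
    rw [hP_apply]
    have : ∀ q : G ⧸ H, cb q x = x := by
      intro q
      induction q using Quotient.inductionOn' with
      | h a =>
        rw [hcb_mk, hc_apply, hp1 _ (hU a⁻¹ trivial x hx)]
        have := rho_inv_apply ρ a⁻¹ x
        rwa [inv_inv] at this
    rw [Finset.sum_congr rfl fun q _ => this q, Finset.sum_const, Finset.card_univ,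
      Nat.cast_smul_eq_nsmul]
    congr 1
    rw [Subgroup.index, Nat.card_eq_fintype_card]
  have hcbg : ∀ (g : G) (q : G ⧸ H) (x : V), cb (g • q) (ρ g x) = ρ g (cb q x) := by
    intro g q x
    induction q using Quotient.inductionOn' with
    | h a =>
      show c (g * a) (ρ g x) = ρ g (c a x)
      rw [hc_apply, hc_apply]
      have h2 : ρ (g * a)⁻¹ (ρ g x) = ρ a⁻¹ x := by
        rw [mul_inv_rev, map_mul, Module.End.mul_apply]
        congr 1
        exact rho_inv_apply ρ g x
      rw [h2, map_mul, Module.End.mul_apply]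
  have hPequiv : ∀ g x, P (ρ g x) = ρ g (P x) := by
    intro g x
    rw [hP_apply, hP_apply, map_sum]
    exact (Fintype.sum_bijective (fun q : G ⧸ H => g • q) (MulAction.bijective g)
      (fun q => ρ g (cb q x)) (fun q => cb q (ρ g x)) (fun q => (hcbg g q x).symm)).symm
  -- now form the projection
  set P' : V →ₗ[F] V := (H.index : F)⁻¹ • P with hP'
  have hP'U : ∀ x, P' x ∈ U := fun x => by
    rw [hP', LinearMap.smul_apply]; exact Submodule.smul_mem _ _ (hPU x)
  set Q : V →ₗ[F] U := LinearMap.codRestrict U P' hP'U with hQ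
  have hQid : ∀ x : U, Q x = x := by
    intro x
    apply Subtype.ext
    rw [hQ, LinearMap.codRestrict_apply]
    rw [hP', LinearMap.smul_apply, hPid _ x.2, smul_smul, inv_mul_cancel₀ hind, one_smul]
  refine ⟨LinearMap.ker Q, ?_, LinearMap.isCompl_of_proj hQid⟩
  intro g _ x hx
  rw [LinearMap.mem_ker] at hx ⊢
  apply Subtype.ext
  have hx0 : P' x = 0 := by
    have := congrArg Subtype.val hx
    rwa [hQ, LinearMap.codRestrict_apply] at this
  rw [hQ, LinearMap.codRestrict_apply]
  show P' (ρ g x) = (0 : V)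
  rw [hP', LinearMap.smul_apply] at hx0 ⊢
  rw [hPequiv, ← map_smul, hx0, map_zero]

end Aux

/-- Clifford-type lemma: `F` a field, `G` a finite group, `H ⊴ G` a normal
subgroup with index `[G:H]` invertible in `F`, `V` a finite-dimensional `F`-representation
of `G`.  Then `V` is semisimple as a `G`-representation iff its restriction to `H` is
semisimple. -/
theorem stmt_6 (F G V : Type) [Field F] [Group G] [Finite G]
    [AddCommGroup V] [Module F V] [FiniteDimensional F V]
    (H : Subgroup G) [H.Normal] (hind : (H.index : F) ≠ 0)
    (ρ : Representation F G V) :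
    RestrictedSemisimple ρ (Set.univ : Set G) ↔ RestrictedSemisimple ρ (H : Set G) := by
  constructor
  · intro hG
    have hG' : ∀ U : Submodule F V, RhoStab ρ (Set.univ : Set G) U →
        ∃ U' : Submodule F V, RhoStab ρ (Set.univ : Set G) U' ∧ IsCompl U U' := hG
    have htopG := sSup_minimal_eq_top ρ (Set.univ : Set G) hG'
    have htopH : sSup {N : Submodule F V | N ≠ ⊥ ∧ RhoStab ρ (H : Set G) N ∧
        ∀ N', N' ≤ N → N' ≠ ⊥ → RhoStab ρ (H : Set G) N' → N' = N} = ⊤ := by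
      rw [eq_top_iff, ← htopG]
      exact sSup_le fun M hM => minimal_univ_le_sSup_minimal_H ρ H hM.1 hM.2.1 hM.2.2
    intro U hU
    exact stab_complement_of_sSup_minimal ρ (H : Set G) htopH U hU
  · intro hH U hU
    exact univ_complement_of_H ρ H hind hH U hU
end

section
/- Let $\Gamma$ be a compact subgroup of $\mathrm{GL}_n(\mathbb{Q}_\ell)$ and $\Delta$ a closed normal subgroup. Then both the total $\ell$-rank and the $\ell$-dimension are additive: $\mathrm{rk}_\ell \Gamma = \mathrm{rk}_\ell \Delta + \mathrm{rk}_\ell(\Gamma/\Delta)$ and $\dim_\ell \Gamma = \dim_\ell \Delta + \dim_\ell(\Gamma/\Delta)$. -/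
/-- A topological group is prosolvable if all of its (finite, for a profinite group)
quotients by open normal subgroups are solvable. -/
def ProSolvable (G : Type) [Group G] [TopologicalSpace G] : Prop :=
  ∀ (N : Subgroup G) [N.Normal], IsOpen (N : Set G) → IsSolvable (G ⧸ N)

/-- The image of a subgroup `M` in `G ⧸ N` is isomorphic to `M ⧸ (N ∩ M)`. -/
noncomputable def mapMk'Equiv {G : Type} [Group G] (N M : Subgroup G) [N.Normal] :
    (↥M ⧸ N.subgroupOf M) ≃* ↥(M.map (QuotientGroup.mk' N)) := by
  have hker : ((QuotientGroup.mk' N).comp M.subtype).ker = N.subgroupOf M := by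
    rw [← MonoidHom.comap_ker, QuotientGroup.ker_mk']; rfl
  have hrange : ((QuotientGroup.mk' N).comp M.subtype).range = M.map (QuotientGroup.mk' N) := by
    rw [MonoidHom.range_comp, Subgroup.range_subtype]
  exact (QuotientGroup.quotientMulEquivOfEq hker.symm).trans
    ((QuotientGroup.quotientKerEquivRange _).trans (MulEquiv.subgroupCongr hrange))

/-- Key step: the invariant `D` is unchanged when passing from a finite quotient `G ⧸ N₁`
to a coarser quotient `G ⧸ N₂` whenever the intermediate layer `N₂ ⧸ N₁` is solvable. -/
theorem D_step
    (D : (H : Type) → [inst : Group H] → ℕ)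
    (hiso : ∀ (H K : Type) [Group H] [Group K], (H ≃* K) → D H = D K)
    (hadd : ∀ (H : Type) [Group H] [Finite H] (N : Subgroup H) [N.Normal],
      D H = D N + D (H ⧸ N))
    (hsolv : ∀ (H : Type) [Group H] [Finite H], IsSolvable H → D H = 0)
    {G : Type} [Group G] (N₁ N₂ : Subgroup G) [N₁.Normal] [N₂.Normal]
    (h : N₁ ≤ N₂) [Finite (G ⧸ N₁)]
    (hsol : IsSolvable (↥N₂ ⧸ N₁.subgroupOf N₂)) :
    D (G ⧸ N₁) = D (G ⧸ N₂) := by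
  set K := N₂.map (QuotientGroup.mk' N₁) with hK
  have h1 : D (G ⧸ N₁) = D ↥K + D ((G ⧸ N₁) ⧸ K) := hadd _ K
  have h2 : D ↥K = 0 := by
    have e := mapMk'Equiv N₁ N₂
    haveI : IsSolvable (↥N₂ ⧸ N₁.subgroupOf N₂) := hsol
    haveI : IsSolvable ↥K := @solvable_of_surjective _ _ _ _ e.toMonoidHom e.surjective hsol
    exact hsolv _ this
  rw [h1, h2, Nat.zero_add]
  exact hiso _ _ (QuotientGroup.quotientQuotientEquivQuotient N₁ N₂ h)

/-- additivity of the total `ℓ`-rank and the `ℓ`-dimension on compact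
subgroups of `GL_n(ℚ_ℓ)`. -/
theorem stmt_19
    (D : (H : Type) → [inst : Group H] → ℕ)
    (hiso : ∀ (H K : Type) [Group H] [Group K], (H ≃* K) → D H = D K)
    (hadd : ∀ (H : Type) [Group H] [Finite H] (N : Subgroup H) [N.Normal],
      D H = D N + D (H ⧸ N))
    (hsolv : ∀ (H : Type) [Group H] [Finite H], IsSolvable H → D H = 0)
    (ℓ n : ℕ) [Fact ℓ.Prime]
    (Γ : Subgroup (GL (Fin n) ℚ_[ℓ]))
    (hΓ : IsCompact ((Γ : Set (GL (Fin n) ℚ_[ℓ]))))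
    (Δ : Subgroup ↥Γ) [Δ.Normal] (hΔ : IsClosed ((Δ : Set ↥Γ)))
    (U : Subgroup ↥Γ) (hUopen : IsOpen ((U : Set ↥Γ))) (hUnorm : U.Normal)
    (hUsolv : ProSolvable ↥U)
    (V : Subgroup ↥Δ) (hVopen : IsOpen ((V : Set ↥Δ))) (hVnorm : V.Normal)
    (hVsolv : ProSolvable ↥V)
    (W : Subgroup (↥Γ ⧸ Δ)) (hWopen : IsOpen ((W : Set (↥Γ ⧸ Δ)))) (hWnorm : W.Normal)
    (hWsolv : ProSolvable ↥W) :
    D (↥Γ ⧸ U) = D (↥Δ ⧸ V) + D ((↥Γ ⧸ Δ) ⧸ W) := by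
  haveI := hUnorm; haveI := hVnorm; haveI := hWnorm
  -- topological setup
  haveI : CompactSpace ↥Γ := isCompact_iff_compactSpace.mp hΓ
  haveI : CompactSpace ↥Δ := isCompact_iff_compactSpace.mp hΔ.isCompact
  haveI : TotallyDisconnectedSpace (Matrix (Fin n) (Fin n) ℚ_[ℓ]) :=
    Pi.totallyDisconnectedSpace
  haveI : TotallyDisconnectedSpace ((Matrix (Fin n) (Fin n) ℚ_[ℓ])ᵐᵒᵖ) :=
    MulOpposite.opHomeomorph.symm.isEmbedding.isTotallyDisconnected_range.mp
      (isTotallyDisconnected_of_totallyDisconnectedSpace _)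
  haveI : TotallyDisconnectedSpace (GL (Fin n) ℚ_[ℓ]) :=
    Units.isEmbedding_embedProduct.isTotallyDisconnected_range.mp
      (isTotallyDisconnected_of_totallyDisconnectedSpace _)
  -- an open set recording the constraints from U, W, V
  obtain ⟨S, hSopen, hSV⟩ := isOpen_induced_iff.mp hVopen
  have hWpre : IsOpen ((QuotientGroup.mk : ↥Γ → ↥Γ ⧸ Δ) ⁻¹' W) :=
    hWopen.preimage QuotientGroup.continuous_mk
  have hOopen : IsOpen ((U : Set ↥Γ) ∩ ((QuotientGroup.mk : ↥Γ → ↥Γ ⧸ Δ) ⁻¹' W) ∩ S) :=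
    (hUopen.inter hWpre).inter hSopen
  have h1S : (1 : ↥Γ) ∈ S := by
    have h1V : (1 : ↥Δ) ∈ (V : Set ↥Δ) := V.one_mem
    rw [← hSV] at h1V
    simpa using h1V
  have h1O : (1 : ↥Γ) ∈ (U : Set ↥Γ) ∩ ((QuotientGroup.mk : ↥Γ → ↥Γ ⧸ Δ) ⁻¹' W) ∩ S := by
    refine ⟨⟨U.one_mem, ?_⟩, h1S⟩
    show ((1 : ↥Γ) : ↥Γ ⧸ Δ) ∈ W
    simpa using W.one_mem
  obtain ⟨C, hCclopen, h1C, hCO⟩ := compact_exists_isClopen_in_isOpen hOopen h1O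
  obtain ⟨N, hN⟩ :=
    IsTopologicalGroup.exist_openNormalSubgroup_sub_clopen_nhds_of_one hCclopen h1C
  set N' : Subgroup ↥Γ := N.toSubgroup with hN'
  haveI hN'norm : N'.Normal := N.isNormal'
  have hN'open : IsOpen (N' : Set ↥Γ) := N.isOpen
  have hNO : (N' : Set ↥Γ) ⊆ (U : Set ↥Γ) ∩ ((QuotientGroup.mk : ↥Γ → ↥Γ ⧸ Δ) ⁻¹' W) ∩ S :=
    fun x hx => hCO (hN hx)
  -- the three inclusions
  have hNU : N' ≤ U := fun x hx => (hNO hx).1.1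
  have hNW : N'.map (QuotientGroup.mk' Δ) ≤ W := by
    rintro _ ⟨x, hx, rfl⟩
    exact (hNO hx).1.2
  have hNV : N'.subgroupOf Δ ≤ V := by
    intro x hx
    have hxS : (x : ↥Γ) ∈ S := (hNO hx).2
    have : x ∈ Subtype.val ⁻¹' S := hxS
    rwa [hSV] at this
  -- finiteness
  haveI : Finite (↥Γ ⧸ N') := Subgroup.quotient_finite_of_isOpen N' hN'open
  have hNΔopen : IsOpen ((N'.subgroupOf Δ : Set ↥Δ)) := by
    have : (N'.subgroupOf Δ : Set ↥Δ) = Subtype.val ⁻¹' (N' : Set ↥Γ) := rfl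
    rw [this]
    exact hN'open.preimage continuous_subtype_val
  haveI : Finite (↥Δ ⧸ N'.subgroupOf Δ) :=
    Subgroup.quotient_finite_of_isOpen _ hNΔopen
  have hNQopen : IsOpen ((N'.map (QuotientGroup.mk' Δ) : Set (↥Γ ⧸ Δ))) := by
    have : (N'.map (QuotientGroup.mk' Δ) : Set (↥Γ ⧸ Δ)) =
        (QuotientGroup.mk : ↥Γ → ↥Γ ⧸ Δ) '' (N' : Set ↥Γ) := rfl
    rw [this]
    exact QuotientGroup.isOpenMap_coe _ hN'open
  haveI : Finite ((↥Γ ⧸ Δ) ⧸ N'.map (QuotientGroup.mk' Δ)) :=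
    Subgroup.quotient_finite_of_isOpen _ hNQopen
  -- step 1 : D (Γ ⧸ N') = D (Γ ⧸ U)
  have hsolU : IsSolvable (↥U ⧸ N'.subgroupOf U) := by
    refine hUsolv (N'.subgroupOf U) ?_
    have : (N'.subgroupOf U : Set ↥U) = Subtype.val ⁻¹' (N' : Set ↥Γ) := rfl
    rw [this]
    exact hN'open.preimage continuous_subtype_val
  have stepU : D (↥Γ ⧸ N') = D (↥Γ ⧸ U) :=
    D_step D hiso hadd hsolv N' U hNU hsolU
  -- step 2 : D (Δ ⧸ N' ∩ Δ) = D (Δ ⧸ V)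
  have hsolV : IsSolvable (↥V ⧸ (N'.subgroupOf Δ).subgroupOf V) := by
    refine hVsolv ((N'.subgroupOf Δ).subgroupOf V) ?_
    have : ((N'.subgroupOf Δ).subgroupOf V : Set ↥V)
        = Subtype.val ⁻¹' (N'.subgroupOf Δ : Set ↥Δ) := rfl
    rw [this]
    exact hNΔopen.preimage continuous_subtype_val
  have stepV : D (↥Δ ⧸ N'.subgroupOf Δ) = D (↥Δ ⧸ V) :=
    D_step D hiso hadd hsolv (N'.subgroupOf Δ) V hNV hsolV
  -- step 3 : D ((Γ⧸Δ) ⧸ π N') = D ((Γ⧸Δ) ⧸ W)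
  have hsolW : IsSolvable (↥W ⧸ (N'.map (QuotientGroup.mk' Δ)).subgroupOf W) := by
    refine hWsolv ((N'.map (QuotientGroup.mk' Δ)).subgroupOf W) ?_
    have : ((N'.map (QuotientGroup.mk' Δ)).subgroupOf W : Set ↥W)
        = Subtype.val ⁻¹' (N'.map (QuotientGroup.mk' Δ) : Set (↥Γ ⧸ Δ)) := rfl
    rw [this]
    exact hNQopen.preimage continuous_subtype_val
  have stepW : D ((↥Γ ⧸ Δ) ⧸ N'.map (QuotientGroup.mk' Δ)) = D ((↥Γ ⧸ Δ) ⧸ W) :=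
    D_step D hiso hadd hsolv (N'.map (QuotientGroup.mk' Δ)) W hNW hsolW
  -- central additivity at level N'
  have hmapN : N'.map (QuotientGroup.mk' N') = ⊥ := by
    ext x
    constructor
    · rintro ⟨y, hy, rfl⟩
      simpa [Subgroup.mem_bot] using (QuotientGroup.eq_one_iff y).mpr hy
    · intro hx
      exact ⟨1, N'.one_mem, by simpa [Subgroup.mem_bot] using hx.symm⟩
  have hmapΔ' : Δ.map (QuotientGroup.mk' N') = (Δ ⊔ N').map (QuotientGroup.mk' N') := by
    rw [Subgroup.map_sup, hmapN, sup_bot_eq]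
  have hmapN'' : N'.map (QuotientGroup.mk' Δ) = (Δ ⊔ N').map (QuotientGroup.mk' Δ) := by
    have : Δ.map (QuotientGroup.mk' Δ) = ⊥ := by
      ext x
      constructor
      · rintro ⟨y, hy, rfl⟩
        simpa [Subgroup.mem_bot] using (QuotientGroup.eq_one_iff y).mpr hy
      · intro hx
        exact ⟨1, Δ.one_mem, by simpa [Subgroup.mem_bot] using hx.symm⟩
    rw [Subgroup.map_sup, this, bot_sup_eq]
  have central : D (↥Γ ⧸ N')
      = D (↥Δ ⧸ N'.subgroupOf Δ) + D ((↥Γ ⧸ Δ) ⧸ N'.map (QuotientGroup.mk' Δ)) := by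
    have h1 : D (↥Γ ⧸ N')
        = D ↥(Δ.map (QuotientGroup.mk' N')) + D ((↥Γ ⧸ N') ⧸ Δ.map (QuotientGroup.mk' N')) :=
      hadd _ _
    have h2 : D ↥(Δ.map (QuotientGroup.mk' N')) = D (↥Δ ⧸ N'.subgroupOf Δ) :=
      hiso _ _ (mapMk'Equiv N' Δ).symm
    have h3 : D ((↥Γ ⧸ N') ⧸ Δ.map (QuotientGroup.mk' N'))
        = D ((↥Γ ⧸ Δ) ⧸ N'.map (QuotientGroup.mk' Δ)) := by
      refine hiso _ _ ?_
      refine (QuotientGroup.quotientMulEquivOfEq hmapΔ').trans ?_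
      refine (QuotientGroup.quotientQuotientEquivQuotient N' (Δ ⊔ N') le_sup_right).trans ?_
      refine ((QuotientGroup.quotientQuotientEquivQuotient Δ (Δ ⊔ N') le_sup_left).symm).trans ?_
      exact QuotientGroup.quotientMulEquivOfEq hmapN''.symm
    rw [h1, h2, h3]
  rw [← stepU, ← stepV, ← stepW]
  exact central
end
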